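/- Let p ∈ [1,2], σ > 0 and a ∈ ℝ. Then D( Exp(p;a,σ) ‖ Exp(p;0,σ) ) ≤ |a|^p / (p σ^p). -/

import Mathlib

open MeasureTheory Real

/-- The univariate `p`-exponential distribution `Exp(p; a, b)`: the probability measure on `ℝ`
with density `C_{p,b}⁻¹ exp(−|x−a|^p/(p b^p))`. -/
noncomputable def pExpDist (p a b : ℝ) : Measure ℝ :=
  (∫⁻ x : ℝ, ENNReal.ofReal (Real.exp (-(|x| ^ p / (p * b ^ p)))))⁻¹ •
    MeasureTheory.volume.withDensity fun x =>
      ENNReal.ofReal (Real.exp (-(|x - a| ^ p / (p * b ^ p))))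

/-- The Kullback–Leibler divergence `D(P‖Q) = ∫ log(dP/dQ) dP`. -/
noncomputable def klDivergence {α : Type*} [MeasurableSpace α] (P Q : Measure α) : ℝ :=
  ∫ x, Real.log (P.rnDeriv Q x).toReal ∂P

section Aux

open Set
open scoped ENNReal NNReal

lemma aux_abs_integrable {f : ℝ → ℝ} (hf : IntegrableOn f (Ioi (0:ℝ))) :
    Integrable fun x : ℝ => f |x| := by
  have h1 : IntegrableOn (fun x => f |x|) (Ioi (0:ℝ)) :=
    hf.congr_fun (fun x hx => by rw [abs_of_pos hx]) measurableSet_Ioi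
  have h2 : IntegrableOn (fun x => f |x|) (Iic (0:ℝ)) := by
    rw [← Measure.map_neg_eq_self (volume : Measure ℝ)]
    have m : MeasurableEmbedding fun x : ℝ => -x :=
      (Homeomorph.neg ℝ).measurableEmbedding
    rw [m.integrableOn_map_iff]
    simp_rw [Function.comp_def, abs_neg, neg_preimage, neg_Iic, neg_zero]
    exact Iff.mpr integrableOn_Ici_iff_integrableOn_Ioi h1
  have := h2.union h1
  rwa [Iic_union_Ioi, integrableOn_univ] at this

lemma aux_integrable_rpow_mul_exp {p s k : ℝ} (hp : 1 ≤ p) (hs : -1 < s) (hk : 0 < k) :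
    Integrable fun x : ℝ => |x| ^ s * Real.exp (-(|x| ^ p / k)) := by
  have h := (integrableOn_rpow_mul_exp_neg_mul_rpow hs (lt_of_lt_of_le one_pos hp)
    (show (0:ℝ) < k⁻¹ by positivity)).congr_fun
    (fun x _ => by by_cases h : True <;> simp only [neg_mul, inv_mul_eq_div] :
      EqOn (fun x : ℝ => x ^ s * Real.exp (-k⁻¹ * x ^ p))
        (fun x : ℝ => x ^ s * Real.exp (-(x ^ p / k))) (Ioi 0)) measurableSet_Ioi
  exact aux_abs_integrable h

lemma aux_integrable_exp {p k : ℝ} (hp : 1 ≤ p) (hk : 0 < k) :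
    Integrable fun x : ℝ => Real.exp (-(|x| ^ p / k)) := by
  have := aux_integrable_rpow_mul_exp (s := 0) hp (by norm_num) hk
  simpa using this

lemma aux_rpow_add_le {s x y : ℝ} (hs0 : 0 ≤ s) (hs1 : s ≤ 1) (hx : 0 ≤ x) (hy : 0 ≤ y) :
    (x + y) ^ s ≤ x ^ s + y ^ s := by
  have h := NNReal.rpow_add_le_add_rpow x.toNNReal y.toNNReal hs0 hs1
  have := NNReal.coe_le_coe.mpr h
  push_cast [NNReal.coe_rpow, Real.coe_toNNReal x hx, Real.coe_toNNReal y hy] at this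
  simpa using this

lemma aux_clarkson {p : ℝ} (hp1 : 1 ≤ p) (hp2 : p ≤ 2) (u v : ℝ) :
    |u + v| ^ p + |u - v| ^ p ≤ 2 * (|u| ^ p + |v| ^ p) := by
  have hs0 : (0:ℝ) ≤ p / 2 := by linarith
  have hs1 : p / 2 ≤ 1 := by linarith
  have key : ∀ t : ℝ, |t| ^ p = (t ^ 2) ^ (p / 2) := by
    intro t
    rw [← sq_abs, ← Real.rpow_natCast |t| 2, ← Real.rpow_mul (abs_nonneg t)]
    norm_num
    ring_nf
  rw [key (u + v), key (u - v), key u, key v]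
  have hA : (0:ℝ) ≤ (u + v) ^ 2 := sq_nonneg _
  have hB : (0:ℝ) ≤ (u - v) ^ 2 := sq_nonneg _
  have conc := (Real.concaveOn_rpow hs0 hs1).2 (mem_Ici.mpr hA) (mem_Ici.mpr hB)
    (by norm_num : (0:ℝ) ≤ 1/2) (by norm_num : (0:ℝ) ≤ 1/2) (by norm_num)
  simp only [smul_eq_mul] at conc
  have hmid : 1/2 * (u + v) ^ 2 + 1/2 * (u - v) ^ 2 = u ^ 2 + v ^ 2 := by ring
  rw [hmid] at conc
  have sub : (u ^ 2 + v ^ 2) ^ (p/2) ≤ (u ^ 2) ^ (p/2) + (v ^ 2) ^ (p/2) :=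
    aux_rpow_add_le hs0 hs1 (sq_nonneg u) (sq_nonneg v)
  linarith

lemma aux_rpow_add_bound {p : ℝ} (hp0 : 0 < p) (y t : ℝ) :
    |y + t| ^ p ≤ 2 ^ p * (|y| ^ p + |t| ^ p) := by
  have h1 : |y + t| ^ p ≤ (|y| + |t|) ^ p :=
    Real.rpow_le_rpow (abs_nonneg _) (abs_add_le _ _) hp0.le
  have hm : |y| + |t| ≤ 2 * max |y| |t| := by
    have := le_max_left |y| |t|; have := le_max_right |y| |t|; linarith
  have h2 : (|y| + |t|) ^ p ≤ (2 * max |y| |t|) ^ p :=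
    Real.rpow_le_rpow (by positivity) hm hp0.le
  have h3 : (2 * max |y| |t|) ^ p = 2 ^ p * (max |y| |t|) ^ p :=
    Real.mul_rpow (by norm_num) (le_max_of_le_left (abs_nonneg _))
  have h4 : (max |y| |t|) ^ p ≤ |y| ^ p + |t| ^ p := by
    rcases max_cases |y| |t| with ⟨h, _⟩ | ⟨h, _⟩ <;> rw [h] <;>
      [linarith [Real.rpow_nonneg (abs_nonneg t) p];
       linarith [Real.rpow_nonneg (abs_nonneg y) p]]
  calc |y + t| ^ p ≤ (2 * max |y| |t|) ^ p := le_trans h1 h2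
    _ = 2 ^ p * (max |y| |t|) ^ p := h3
    _ ≤ 2 ^ p * (|y| ^ p + |t| ^ p) := by
        apply mul_le_mul_of_nonneg_left h4 (by positivity)


lemma main_core (p k a : ℝ) (hp1 : 1 ≤ p) (hp2 : p ≤ 2) (hk : 0 < k)
    (w f : ℝ → ℝ) (hw : ∀ x, w x = Real.exp (-(|x| ^ p / k)))
    (hf : ∀ x, f x = Real.exp (-(|x - a| ^ p / k)))
    (c : ℝ≥0∞) (hc : c = ∫⁻ x, ENNReal.ofReal (w x)) :
    klDivergence (c⁻¹ • volume.withDensity fun x => ENNReal.ofReal (f x))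
      (c⁻¹ • volume.withDensity fun x => ENNReal.ofReal (w x)) ≤ |a| ^ p / k := by
  have hp0 : (0:ℝ) < p := lt_of_lt_of_le one_pos hp1
  have hwpos : ∀ x, 0 < w x := fun x => (hw x) ▸ Real.exp_pos _
  have hfpos : ∀ x, 0 < f x := fun x => (hf x) ▸ Real.exp_pos _
  have hcontw : Continuous w := by
    have h1 : Continuous fun x : ℝ => |x| ^ p :=
      continuous_abs.rpow_const fun x => Or.inr hp0.le
    have : Continuous fun x : ℝ => Real.exp (-(|x| ^ p / k)) :=
      Real.continuous_exp.comp ((h1.div_const k).neg)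
    simpa [← funext hw] using this
  have hcontf : Continuous f := by
    have h1 : Continuous fun x : ℝ => |x - a| ^ p :=
      ((continuous_id.sub continuous_const).abs).rpow_const fun x => Or.inr hp0.le
    have : Continuous fun x : ℝ => Real.exp (-(|x - a| ^ p / k)) :=
      Real.continuous_exp.comp ((h1.div_const k).neg)
    simpa [← funext hf] using this
  have hw_int : Integrable w := by
    have := aux_integrable_exp hp1 hk
    simpa [← funext hw] using this
  have hZ : 0 < ∫ x, w x := by
    refine (integral_pos_iff_support_of_nonneg (fun x => (hwpos x).le) hw_int).mpr ?_
    have : Function.support w = univ := eq_univ_iff_forall.mpr fun x => (hwpos x).ne'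
    rw [this]; simp
  set Z : ℝ := ∫ x, w x with hZ_def
  have hc_eq : c = ENNReal.ofReal Z := by
    rw [hc]
    exact (ofReal_integral_eq_lintegral_ofReal hw_int
      (Filter.Eventually.of_forall fun x => (hwpos x).le)).symm
  have hc_ne_top : c ≠ ⊤ := by rw [hc_eq]; exact ENNReal.ofReal_ne_top
  have hc_ne_zero : c ≠ 0 := by rw [hc_eq]; exact (ENNReal.ofReal_pos.mpr hZ).ne'
  have hwm : Measurable fun x : ℝ => ENNReal.ofReal (w x) :=
    (hcontw.measurable).ennreal_ofReal
  have hfm : Measurable fun x : ℝ => ENNReal.ofReal (f x) :=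
    (hcontf.measurable).ennreal_ofReal
  set g : ℝ → ℝ≥0∞ := fun x => ENNReal.ofReal (Real.exp ((|x| ^ p - |x - a| ^ p) / k))
    with hg_def
  have hgm : Measurable g := by
    apply Measurable.ennreal_ofReal
    apply Continuous.measurable
    apply Real.continuous_exp.comp
    apply Continuous.div_const
    exact (continuous_abs.rpow_const fun x => Or.inr hp0.le).sub
      ((continuous_id.sub continuous_const).abs.rpow_const fun x => Or.inr hp0.le)
  set P : Measure ℝ := c⁻¹ • volume.withDensity (fun x => ENNReal.ofReal (f x)) with hP_def
  set Q : Measure ℝ := c⁻¹ • volume.withDensity (fun x => ENNReal.ofReal (w x)) with hQ_def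
  have hPQ : P = Q.withDensity g := by
    rw [hP_def, hQ_def, withDensity_smul_measure, ← withDensity_mul volume hwm hgm]
    have heq : (fun x : ℝ => ENNReal.ofReal (f x)) = (fun x => ENNReal.ofReal (w x)) * g := by
      funext x
      simp only [Pi.mul_apply, hg_def]
      rw [hw x, hf x, ← ENNReal.ofReal_mul (Real.exp_pos _).le, ← Real.exp_add]
      congr 2
      field_simp
      ring
    rw [heq]
  have hQuniv : Q univ = 1 := by
    rw [hQ_def]
    simp only [Measure.smul_apply, smul_eq_mul, withDensity_apply _ MeasurableSet.univ,
      Measure.restrict_univ]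
    rw [← hc]
    exact ENNReal.inv_mul_cancel hc_ne_zero hc_ne_top
  haveI hQprob : IsProbabilityMeasure Q := ⟨hQuniv⟩
  have hrn : P.rnDeriv Q =ᵐ[Q] g := by
    rw [hPQ]; exact Measure.rnDeriv_withDensity Q hgm
  have hac : P ≪ Q := hPQ ▸ withDensity_absolutelyContinuous Q g
  have hrnP : P.rnDeriv Q =ᵐ[P] g := hac.ae_eq hrn
  have hkl : klDivergence P Q = ∫ x, (|x| ^ p - |x - a| ^ p) / k ∂P := by
    rw [klDivergence]
    apply integral_congr_ae
    filter_upwards [hrnP] with x hx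
    rw [hx, hg_def]
    simp only []
    rw [ENNReal.toReal_ofReal (Real.exp_pos _).le, Real.log_exp]
  rw [hkl]
  -- integrability facts
  have hg1_int : Integrable fun x : ℝ => |x| ^ p * w x := by
    have := aux_integrable_rpow_mul_exp (s := p) hp1 (by linarith) hk
    simpa only [hw] using this
  have hGint : ∀ t : ℝ, Integrable fun y : ℝ => (|y + t| ^ p - |y| ^ p) * w y := by
    intro t
    have hcontG : Continuous fun y : ℝ => (|y + t| ^ p - |y| ^ p) * w y :=
      ((((continuous_id.add continuous_const).abs).rpow_const fun x => Or.inr hp0.le).sub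
        (continuous_abs.rpow_const fun x => Or.inr hp0.le)).mul hcontw
    have hD : Integrable fun y : ℝ =>
        (2 ^ p + 1) * (|y| ^ p * w y) + (2 ^ p * |t| ^ p) * w y :=
      (hg1_int.const_mul _).add (hw_int.const_mul _)
    refine hD.mono hcontG.aestronglyMeasurable (Filter.Eventually.of_forall fun y => ?_)
    have h0 : 0 ≤ w y := (hwpos y).le
    have h1 : |y + t| ^ p ≤ 2 ^ p * (|y| ^ p + |t| ^ p) := aux_rpow_add_bound hp0 y t
    have h2 : (0:ℝ) ≤ |y| ^ p := Real.rpow_nonneg (abs_nonneg _) _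
    have h3 : (0:ℝ) ≤ |y + t| ^ p := Real.rpow_nonneg (abs_nonneg _) _
    have h4 : (0:ℝ) ≤ |t| ^ p := Real.rpow_nonneg (abs_nonneg _) _
    have h2p : (0:ℝ) ≤ 2 ^ p := Real.rpow_nonneg (by norm_num) _
    rw [Real.norm_eq_abs, Real.norm_eq_abs, abs_mul, abs_of_nonneg h0]
    have hRnn : 0 ≤ (2 ^ p + 1) * (|y| ^ p * w y) + (2 ^ p * |t| ^ p) * w y := by
      have := mul_nonneg (mul_nonneg h2p h4) h0
      have := mul_nonneg (by linarith : (0:ℝ) ≤ 2 ^ p + 1) (mul_nonneg h2 h0)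
      linarith
    rw [abs_of_nonneg hRnn]
    have h5 : |(|y + t| ^ p - |y| ^ p)| ≤ 2 ^ p * (|y| ^ p + |t| ^ p) + |y| ^ p := by
      have h6 : (0:ℝ) ≤ 2 ^ p * (|y| ^ p + |t| ^ p) := mul_nonneg h2p (by linarith)
      rw [abs_le]
      constructor <;> [linarith; linarith]
    calc |(|y + t| ^ p - |y| ^ p)| * w y
        ≤ (2 ^ p * (|y| ^ p + |t| ^ p) + |y| ^ p) * w y :=
          mul_le_mul_of_nonneg_right h5 h0
      _ = (2 ^ p + 1) * (|y| ^ p * w y) + (2 ^ p * |t| ^ p) * w y := by ring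
  -- rewrite the P-integral as a Lebesgue (volume) integral
  have hPint : (∫ x, (|x| ^ p - |x - a| ^ p) / k ∂P)
      = Z⁻¹ * ((∫ x, (|x| ^ p - |x - a| ^ p) * f x) / k) := by
    rw [hP_def, integral_smul_measure]
    have hd : (fun x : ℝ => ENNReal.ofReal (f x)) = fun x => ((f x).toNNReal : ℝ≥0∞) := rfl
    rw [hd, integral_withDensity_eq_integral_smul (hcontf.measurable.real_toNNReal)
      (fun x => (|x| ^ p - |x - a| ^ p) / k)]
    rw [smul_eq_mul]
    congr 1
    · rw [hc_eq, ← ENNReal.ofReal_inv_of_pos hZ, ENNReal.toReal_ofReal (by positivity)]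
    · rw [← integral_div]
      refine integral_congr_ae (Filter.Eventually.of_forall fun x => ?_)
      simp only [NNReal.smul_def, Real.coe_toNNReal _ (hfpos x).le, smul_eq_mul]
      ring
  rw [hPint]
  -- change of variables
  have hcov1 : (∫ x, (|x| ^ p - |x - a| ^ p) * f x)
      = ∫ y, (|y + a| ^ p - |y| ^ p) * w y := by
    rw [← integral_add_right_eq_self (μ := volume)
      (fun x => (|x| ^ p - |x - a| ^ p) * f x) a]
    refine integral_congr_ae (Filter.Eventually.of_forall fun y => ?_)
    simp only [add_sub_cancel_right, hf, hw]
  have hcov2 : (∫ y, (|y + a| ^ p - |y| ^ p) * w y)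
      = ∫ y, (|y - a| ^ p - |y| ^ p) * w y := by
    rw [← integral_neg_eq_self (fun y : ℝ => (|y + a| ^ p - |y| ^ p) * w y) volume]
    refine integral_congr_ae (Filter.Eventually.of_forall fun y => ?_)
    have e1 : -y + a = -(y - a) := by ring
    simp only [hw, e1, abs_neg]
  rw [hcov1]
  -- averaging and Clarkson
  have hG1 : Integrable fun y : ℝ => (|y + a| ^ p - |y| ^ p) * w y := hGint a
  have hG2 : Integrable fun y : ℝ => (|y - a| ^ p - |y| ^ p) * w y := by
    have := hGint (-a); simpa [sub_eq_add_neg] using this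
  have hsum : (∫ y, (|y + a| ^ p - |y| ^ p) * w y) + ∫ y, (|y - a| ^ p - |y| ^ p) * w y
      = ∫ y, ((|y + a| ^ p - |y| ^ p) * w y + (|y - a| ^ p - |y| ^ p) * w y) :=
    (integral_add hG1 hG2).symm
  have hub : (∫ y, ((|y + a| ^ p - |y| ^ p) * w y + (|y - a| ^ p - |y| ^ p) * w y))
      ≤ ∫ y, (2 * |a| ^ p) * w y := by
    refine integral_mono (hG1.add hG2) (hw_int.const_mul _) fun y => ?_
    have hcl := aux_clarkson hp1 hp2 y a
    have h6 := mul_le_mul_of_nonneg_right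
      (show (|y + a| ^ p - |y| ^ p) + (|y - a| ^ p - |y| ^ p) ≤ 2 * |a| ^ p by linarith)
      (hwpos y).le
    simp only [Pi.add_apply]
    nlinarith [h6]
  have hI2 : (∫ y, (2 * |a| ^ p) * w y) = 2 * |a| ^ p * Z := by
    rw [integral_const_mul]
  have hIle : (∫ y, (|y + a| ^ p - |y| ^ p) * w y) ≤ |a| ^ p * Z := by
    rw [hcov2] at hsum
    nlinarith [hsum, hub, hI2, hcov2]
  -- final arithmetic
  have hfin : Z⁻¹ * ((∫ y, (|y + a| ^ p - |y| ^ p) * w y) / k)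
      ≤ Z⁻¹ * ((|a| ^ p * Z) / k) := by
    apply mul_le_mul_of_nonneg_left _ (inv_nonneg.mpr hZ.le)
    exact (div_le_div_iff_of_pos_right hk).mpr hIle
  calc Z⁻¹ * ((∫ y, (|y + a| ^ p - |y| ^ p) * w y) / k) ≤ Z⁻¹ * ((|a| ^ p * Z) / k) := hfin
    _ = |a| ^ p / k := by field_simp


end Aux

/-- For `p ∈ [1,2]`, `σ > 0` and `a ∈ ℝ`:
`D(Exp(p;a,σ) ‖ Exp(p;0,σ)) ≤ |a|^p/(p σ^p)`. -/
theorem klDiv_pExp_shift_le (p σ a : ℝ) (hp1 : 1 ≤ p) (hp2 : p ≤ 2) (hσ : 0 < σ) :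
    klDivergence (pExpDist p a σ) (pExpDist p 0 σ) ≤ |a| ^ p / (p * σ ^ p) := by
  have hp0 : (0:ℝ) < p := lt_of_lt_of_le one_pos hp1
  have hk : 0 < p * σ ^ p := mul_pos hp0 (Real.rpow_pos_of_pos hσ p)
  unfold pExpDist
  simp only [sub_zero]
  exact main_core p (p * σ ^ p) a hp1 hp2 hk
    (fun x => Real.exp (-(|x| ^ p / (p * σ ^ p))))
    (fun x => Real.exp (-(|x - a| ^ p / (p * σ ^ p))))
    (fun x => rfl) (fun x => rfl) _ rfl
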